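/- Let t0, t1 be strings of lengths n0, n1 with distinct unique end-of-string symbols, and let h ≥ max_lcp + 1 where max_lcp is the maximum over all pairs (i,j) of LCP(t0[i,n0], t1[j,n1]). Then for all suffix positions p of t0 and q of t1, t0[p,p+h-1] ⪯ t1[q,q+h-1] if and only if t0[p,n0] ⪯ t1[q,n1]. In other words, comparing suffixes truncated to depth h agrees with full lexicographic comparison of suffixes. -/

import Mathlib

/-- Length of the longest common prefix of two lists. -/
def lcp {α : Type*} [DecidableEq α] : List α → List α → ℕ
  | a :: x, b :: y => if a = b then lcp x y + 1 else 0
  | _, _ => 0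

/-- `t0` and `t1` end with distinct unique end-of-string symbols `$0 < $1`,
each strictly smaller than all other symbols occurring in either string. -/
def DistinctEndMarkers {α : Type*} [LinearOrder α] (t0 t1 : List α) : Prop :=
  ∃ (h0 : t0 ≠ []) (h1 : t1 ≠ []),
    t0.getLast h0 < t1.getLast h1 ∧
    (∀ c ∈ t0 ++ t1, c ≠ t0.getLast h0 → c ≠ t1.getLast h1 → t1.getLast h1 < c) ∧
    (∀ i (hi : i < t0.length - 1), t0[i]'(by omega) ≠ t0.getLast h0) ∧
    (∀ i (hi : i < t1.length - 1), t1[i]'(by omega) ≠ t1.getLast h1) ∧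
    t0.getLast h0 ∉ t1 ∧ t1.getLast h1 ∉ t0

theorem list_lt_iff_lex {α : Type*} [LinearOrder α] (x y : List α) :
    x < y ↔ List.Lex (·<·) x y := Iff.rfl

theorem cons_le_cons_iff' {α : Type*} [LinearOrder α] (a b : α) (x y : List α) :
    (a :: x ≤ b :: y) ↔ a < b ∨ (a = b ∧ x ≤ y) := by
  constructor
  · intro hle
    rcases lt_or_eq_of_le hle with hlt | heq
    · rw [list_lt_iff_lex] at hlt
      cases hlt with
      | cons h => exact Or.inr ⟨rfl, le_of_lt h⟩
      | rel h => exact Or.inl h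
    · injection heq with h1 h2
      exact Or.inr ⟨h1, le_of_eq h2⟩
  · rintro (hab | ⟨rfl, hxy⟩)
    · exact le_of_lt ((list_lt_iff_lex _ _).mpr (List.Lex.rel hab))
    · exact List.cons_le_cons a hxy

theorem not_cons_le_nil {α : Type*} [LinearOrder α] (a : α) (x : List α) :
    ¬ (a :: x ≤ []) := by
  intro hle
  rcases lt_or_eq_of_le hle with hlt | heq
  · rw [list_lt_iff_lex] at hlt; cases hlt
  · exact List.cons_ne_nil a x heq

theorem take_le_iff {α : Type*} [LinearOrder α] :
    ∀ (h : ℕ) (x y : List α), lcp x y < h → (x.take h ≤ y.take h ↔ x ≤ y)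
  | h, [], y, _ => by
      have H : ∀ l : List α, ([] : List α) ≤ l := fun l => by
        cases l with
        | nil => exact le_refl _
        | cons a l => exact le_of_lt ((list_lt_iff_lex _ _).mpr List.Lex.nil)
      rw [List.take_nil]
      exact iff_of_true (H _) (H _)
  | h+1, a :: x, [], _ => by
      simp only [List.take_nil, List.take_succ_cons]
      exact iff_of_false (not_cons_le_nil _ _) (not_cons_le_nil _ _)
  | h+1, a :: x, b :: y, hlt => by
      simp only [List.take_succ_cons]
      rw [cons_le_cons_iff', cons_le_cons_iff']
      by_cases hab : a = b
      · have : lcp x y < h := by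
          have := hlt; simp [lcp, hab] at this; omega
        rw [take_le_iff h x y this]
      · simp [hab]

/-- if `h` exceeds the maximum LCP between any suffix of `t0` and any
suffix of `t1`, then comparing suffixes truncated at depth `h` agrees with the full
lexicographic comparison of the suffixes. (0-based positions `p, q`.) -/
theorem truncated_comparison_beyond_maxlcp {α : Type*} [LinearOrder α] (t0 t1 : List α)
    (hend : DistinctEndMarkers t0 t1)
    (h : ℕ)
    (hmax : ∀ p < t0.length, ∀ q < t1.length, lcp (t0.drop p) (t1.drop q) < h) :
    ∀ p < t0.length, ∀ q < t1.length,
      ((t0.drop p).take h ≤ (t1.drop q).take h ↔ t0.drop p ≤ t1.drop q) := by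
  intro p hp q hq
  exact take_le_iff h _ _ (hmax p hp q hq)
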